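/- arXiv:1310.3812 — 3 statements merged into one kernel-verified Lean document; each statement's English description precedes it below -/
import Mathlib

section
/- Let k be a positive integer. There exists a unique sequence (a_j)_{j≥1} of rational numbers such that exp(−Σ_{j≥1} a_j x^{j+1} d/dx) · x = ((1+x)^k − 1)/k in ℚ[[x]], where the exponential of the derivation is applied to the power series x (the action is well defined since each operator x^{j+1} d/dx strictly increases the order of a power series with zero constant term). -/
noncomputable section

open PowerSeries

/-- Formal derivative `d/dx` on `ℚ[[x]]`, coefficientwise. -/
def pderiv (f : PowerSeries ℚ) : PowerSeries ℚ :=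
  PowerSeries.mk fun n => (n + 1 : ℚ) * PowerSeries.coeff (R := ℚ) (n + 1) f

/-- The power series `Σ_{j≥1} a_j x^{j+1}`, where `a i` encodes the coefficient `a_{i+1}`. -/
def coefSeries (a : ℕ → ℚ) : PowerSeries ℚ :=
  PowerSeries.mk fun n => if 2 ≤ n then a (n - 2) else 0

/-- The derivation `D = Σ_{j≥1} a_j x^{j+1} d/dx` acting on `ℚ[[x]]`. -/
def Dop (a : ℕ → ℚ) (f : PowerSeries ℚ) : PowerSeries ℚ :=
  coefSeries a * pderiv f

/-- `exp(−Σ_{j≥1} a_j x^{j+1} d/dx) · x = Σ_{m≥0} (−D)^m(x)/m!`.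
Since each `x^{j+1} d/dx` strictly increases the order of a series with zero constant
term, `D^m(x)` has order `≥ m + 1`, so the coefficient of `x^n` only receives
contributions from `m ≤ n`; the truncated sum below is therefore the honest
`(x)`-adically convergent sum. -/
def expNegD (a : ℕ → ℚ) : PowerSeries ℚ :=
  PowerSeries.mk fun n =>
    ∑ m ∈ Finset.range (n + 1),
      ((-1 : ℚ) ^ m / m.factorial) * PowerSeries.coeff (R := ℚ) n ((Dop a)^[m] PowerSeries.X)

lemma coeff_coefSeries (a : ℕ → ℚ) (N : ℕ) :
    PowerSeries.coeff (R := ℚ) N (coefSeries a) = if 2 ≤ N then a (N - 2) else 0 := by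
  simp [coefSeries]

lemma coeff_Dop (a : ℕ → ℚ) (f : PowerSeries ℚ) (N : ℕ) :
    PowerSeries.coeff (R := ℚ) N (Dop a f) =
      ∑ p ∈ Finset.HasAntidiagonal.antidiagonal N,
        (if 2 ≤ p.1 then a (p.1 - 2) else 0) *
          ((p.2 + 1 : ℚ) * PowerSeries.coeff (R := ℚ) (p.2 + 1) f) := by
  rw [Dop, PowerSeries.coeff_mul]
  refine Finset.sum_congr rfl fun p hp => ?_
  rw [coeff_coefSeries]
  simp [pderiv]

lemma coeff_iter_eq_zero (a : ℕ → ℚ) :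
    ∀ m N, N ≤ m → PowerSeries.coeff (R := ℚ) N ((Dop a)^[m] PowerSeries.X) = 0 := by
  intro m
  induction m with
  | zero =>
    intro N hN
    obtain rfl : N = 0 := Nat.le_zero.mp hN
    simp [PowerSeries.coeff_X]
  | succ m ih =>
    intro N hN
    rw [Function.iterate_succ_apply', coeff_Dop]
    refine Finset.sum_eq_zero fun p hp => ?_
    rw [Finset.HasAntidiagonal.mem_antidiagonal] at hp
    by_cases h2 : 2 ≤ p.1
    · rw [ih (p.2 + 1) (by omega)]; ring
    · simp [h2]

lemma coeff_iter_congr (J : ℕ) (a b : ℕ → ℚ) (hab : ∀ j < J, a j = b j) :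
    ∀ m N, N ≤ J + m →
      PowerSeries.coeff (R := ℚ) N ((Dop a)^[m] PowerSeries.X) =
      PowerSeries.coeff (R := ℚ) N ((Dop b)^[m] PowerSeries.X) := by
  intro m
  induction m with
  | zero => intro N _; simp
  | succ m ih =>
    intro N hN
    rw [Function.iterate_succ_apply', Function.iterate_succ_apply', coeff_Dop, coeff_Dop]
    refine Finset.sum_congr rfl fun p hp => ?_
    rw [Finset.HasAntidiagonal.mem_antidiagonal] at hp
    by_cases h2 : 2 ≤ p.1
    · by_cases hl : p.2 + 1 ≤ m
      · rw [coeff_iter_eq_zero a m _ hl, coeff_iter_eq_zero b m _ hl]; ring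
      · rw [ih (p.2 + 1) (by omega), hab (p.1 - 2) (by omega)]
    · simp [h2]

lemma pderiv_X : pderiv (PowerSeries.X : PowerSeries ℚ) = 1 := by
  ext n
  cases n <;> simp [pderiv, PowerSeries.coeff_X, PowerSeries.coeff_one]

lemma Dop_X (a : ℕ → ℚ) : Dop a PowerSeries.X = coefSeries a := by
  rw [Dop, pderiv_X, mul_one]

/-- The part of `coeff (n+2) (expNegD a)` coming from `m ≥ 2`; depends only on `a j`, `j < n`. -/
def Efun (a : ℕ → ℚ) (n : ℕ) : ℚ :=
  ∑ m ∈ Finset.Ico 2 (n + 3),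
    ((-1 : ℚ) ^ m / m.factorial) * PowerSeries.coeff (R := ℚ) (n + 2) ((Dop a)^[m] PowerSeries.X)

lemma Efun_congr {a b : ℕ → ℚ} {n : ℕ} (h : ∀ j < n, a j = b j) : Efun a n = Efun b n := by
  refine Finset.sum_congr rfl fun m hm => ?_
  rw [Finset.mem_Ico] at hm
  rw [coeff_iter_congr n a b h m (n + 2) (by omega)]

lemma coeff_expNegD (a : ℕ → ℚ) (n : ℕ) :
    PowerSeries.coeff (R := ℚ) (n + 2) (expNegD a) = -a n + Efun a n := by
  rw [expNegD, PowerSeries.coeff_mk]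
  rw [Finset.range_eq_Ico, ← Finset.sum_Ico_consecutive _ (by omega : (0:ℕ) ≤ 2) (by omega : 2 ≤ n + 3)]
  have h01 : Finset.Ico 0 2 = ({0, 1} : Finset ℕ) := by decide
  rw [h01]
  rw [Finset.sum_insert (by decide), Finset.sum_singleton]
  rw [Function.iterate_zero_apply, Function.iterate_one, Dop_X, coeff_coefSeries,
    if_pos (by omega : 2 ≤ n + 2), PowerSeries.coeff_X, if_neg (by omega : ¬ n + 2 = 1),
    show n + 2 - 2 = n from rfl]
  norm_num [Efun]

lemma coeff_expNegD_zero (a : ℕ → ℚ) : PowerSeries.coeff (R := ℚ) 0 (expNegD a) = 0 := by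
  rw [expNegD, PowerSeries.coeff_mk]
  simp [PowerSeries.coeff_X]

lemma coeff_expNegD_one (a : ℕ → ℚ) : PowerSeries.coeff (R := ℚ) 1 (expNegD a) = 1 := by
  rw [expNegD, PowerSeries.coeff_mk]
  rw [show (1 + 1 : ℕ) = 2 from rfl, Finset.sum_range_succ, Finset.sum_range_one]
  rw [Function.iterate_zero_apply, Function.iterate_one, Dop_X, coeff_coefSeries]
  simp [PowerSeries.coeff_X]

lemma expNegD_eq_iff (a : ℕ → ℚ) (G : PowerSeries ℚ)
    (h0 : PowerSeries.coeff (R := ℚ) 0 G = 0) (h1 : PowerSeries.coeff (R := ℚ) 1 G = 1) :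
    expNegD a = G ↔ ∀ n, -a n + Efun a n = PowerSeries.coeff (R := ℚ) (n + 2) G := by
  constructor
  · intro h n; rw [← coeff_expNegD, h]
  · intro h
    ext N
    match N with
    | 0 => rw [h0, coeff_expNegD_zero]
    | 1 => rw [h1, coeff_expNegD_one]
    | (n + 2) => rw [coeff_expNegD, h]

/-- The recursively-determined sequence. -/
def aseq (g : ℕ → ℚ) (n : ℕ) : ℚ :=
  Efun (fun j => if _ : j < n then aseq g j else 0) n - g (n + 2)
termination_by n

lemma aseq_eq (g : ℕ → ℚ) (n : ℕ) : aseq g n = Efun (aseq g) n - g (n + 2) := by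
  rw [aseq]
  congr 1
  exact Efun_congr fun j hj => by simp [hj]

lemma coeff_one_add_X_pow (k N : ℕ) :
    PowerSeries.coeff (R := ℚ) N ((1 + PowerSeries.X) ^ k) = (k.choose N : ℚ) := by
  have : ((1 + PowerSeries.X : PowerSeries ℚ)) = ((1 + Polynomial.X : Polynomial ℚ) : PowerSeries ℚ) := by
    push_cast
    rfl
  rw [this, ← Polynomial.coe_pow, Polynomial.coeff_coe, Polynomial.coeff_one_add_X_pow]

theorem stmt2' (k : ℕ) (hk : 0 < k) :
    ∃! a : ℕ → ℚ,
      expNegD a = PowerSeries.C (R := ℚ) (1 / k) * ((1 + PowerSeries.X) ^ k - 1) := by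
  set G : PowerSeries ℚ := PowerSeries.C (R := ℚ) (1 / k) * ((1 + PowerSeries.X) ^ k - 1) with hG
  have hkQ : (k : ℚ) ≠ 0 := Nat.cast_ne_zero.mpr hk.ne'
  have hcoef : ∀ N, PowerSeries.coeff (R := ℚ) N G =
      (1 / k) * ((k.choose N : ℚ) - if N = 0 then 1 else 0) := by
    intro N
    rw [hG, PowerSeries.coeff_C_mul, map_sub, coeff_one_add_X_pow, PowerSeries.coeff_one]
  have h0 : PowerSeries.coeff (R := ℚ) 0 G = 0 := by simp [hcoef 0]
  have h1 : PowerSeries.coeff (R := ℚ) 1 G = 1 := by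
    rw [hcoef 1]
    simp [Nat.choose_one_right]
    field_simp
  set g : ℕ → ℚ := fun N => PowerSeries.coeff (R := ℚ) N G with hg
  have key : ∀ n, -aseq g n + Efun (aseq g) n = PowerSeries.coeff (R := ℚ) (n + 2) G := by
    intro n
    have hgn : PowerSeries.coeff (R := ℚ) (n + 2) G = g (n + 2) := rfl
    rw [hgn, aseq_eq]
    ring
  refine ⟨aseq g, ?_, ?_⟩
  · show expNegD (aseq g) = G
    rw [expNegD_eq_iff _ G h0 h1]
    exact key
  · intro b hb
    rw [expNegD_eq_iff _ G h0 h1] at hb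
    funext n
    induction n using Nat.strong_induction_on with
    | _ n ih =>
      have h1' := hb n
      have h2' := key n
      have hE : Efun b n = Efun (aseq g) n := Efun_congr fun j hj => ih j hj
      rw [hE] at h1'
      linarith [h1', h2']

/-- for each positive integer `k` there exists a unique sequence
`(a_j)_{j≥1}` of rationals (encoded as `a : ℕ → ℚ` with `a i = a_{i+1}`) such that
`exp(−Σ_{j≥1} a_j x^{j+1} d/dx) · x = ((1+x)^k − 1)/k` in `ℚ[[x]]`. -/
theorem stmt2 (k : ℕ) (hk : 0 < k) :
    ∃! a : ℕ → ℚ,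
      expNegD a = PowerSeries.C (R := ℚ) (1 / k) * ((1 + PowerSeries.X) ^ k - 1) := by
  exact stmt2' k hk
end
end

section
/- Let k be a positive integer. The delta function identity x_2^{−1} δ((x_1 − x_0)^{1/k} / x_2^{1/k}) = x_1^{−1} δ((x_2 + x_0)^{1/k} / x_1^{1/k}) holds, where δ(y^{1/k}/z^{1/k}) := Σ_{m∈(1/k)ℤ} y^m z^{−m}, and fractional powers (x_1 − x_0)^m, (x_2 + x_0)^m for m ∈ (1/k)ℤ are expanded as binomial series in nonnegative powers of x_0. -/
set_option maxRecDepth 100000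

noncomputable section

/-- Generalized binomial coefficient `C(r, n) = r(r-1)⋯(r-n+1)/n!` for `r : ℚ`. -/
def qchoose (r : ℚ) (n : ℕ) : ℚ :=
  (∏ i ∈ Finset.range n, (r - i)) / n.factorial

lemma qchoose_reflect (r : ℚ) (j : ℕ) :
    qchoose ((j : ℚ) - r - 1) j = (-1) ^ j * qchoose r j := by
  have h : ∏ i ∈ Finset.range j, ((j : ℚ) - r - 1 - i)
      = (-1) ^ j * ∏ i ∈ Finset.range j, (r - i) := by
    calc ∏ i ∈ Finset.range j, ((j : ℚ) - r - 1 - i)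
        = ∏ i ∈ Finset.range j, (-(r - ((j - 1 - i : ℕ) : ℚ))) := by
          refine Finset.prod_congr rfl fun i hi => ?_
          have hi' := Finset.mem_range.mp hi
          have h1 : ((j - 1 - i : ℕ) : ℚ) = (j : ℚ) - 1 - i := by
            have : j - 1 - i = j - (1 + i) := by omega
            rw [this, Nat.cast_sub (by omega)]
            push_cast; ring
          rw [h1]; ring
      _ = (-1) ^ j * ∏ i ∈ Finset.range j, (r - ((j - 1 - i : ℕ) : ℚ)) := by
          rw [show (fun i => -(r - ((j - 1 - i : ℕ) : ℚ)))
              = fun i => (-1) * (r - ((j - 1 - i : ℕ) : ℚ)) from funext fun i => by ring]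
          rw [Finset.prod_mul_distrib, Finset.prod_const, Finset.card_range]
      _ = (-1) ^ j * ∏ i ∈ Finset.range j, (r - i) := by
          rw [Finset.prod_range_reflect (fun i => r - (i : ℚ)) j]
  simp [qchoose, h, mul_div_assoc]

/-- for a positive integer `k`, the delta function identity
`x₂⁻¹ δ((x₁−x₀)^{1/k}/x₂^{1/k}) = x₁⁻¹ δ((x₂+x₀)^{1/k}/x₁^{1/k})`, where
`δ(y^{1/k}/z^{1/k}) := Σ_{m∈(1/k)ℤ} y^m z^{−m}` and fractional powers `(x₁−x₀)^m`,
`(x₂+x₀)^m` (`m ∈ (1/k)ℤ`) are expanded by the binomial series in nonnegative powers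
of `x₀`.  Exponents of `x₁`, `x₂` lie in `(1/k)ℤ` and are encoded by integers
(`b` encodes `x₁^{b/k}`, `c` encodes `x₂^{c/k}`); the left side is
`Σ_{s∈ℤ} (x₁−x₀)^{s/k} x₂^{−s/k−1}` and the right side is
`Σ_{s∈ℤ} (x₂+x₀)^{s/k} x₁^{−s/k−1}`; the theorem asserts equality of the coefficient
functions at `x₀^j x₁^{b/k} x₂^{c/k}`. -/
theorem stmt7 (k : ℕ) (hk : 0 < k) (j : ℕ) (b c : ℤ) :
    (∑ᶠ s : ℤ, if b = s - k * j ∧ c = -s - k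
        then (-1 : ℚ) ^ j * qchoose ((s : ℚ) / k) j else 0)
    = ∑ᶠ s : ℤ, if b = -s - k ∧ c = s - k * j
        then qchoose ((s : ℚ) / k) j else 0 := by
  rw [finsum_eq_single _ (b + k * j) (fun x hx => by
    rw [if_neg]; rintro ⟨h1, -⟩; omega)]
  rw [finsum_eq_single _ (-b - k) (fun x hx => by
    rw [if_neg]; rintro ⟨h1, -⟩; omega)]
  by_cases hc : c = -(b + k * j) - k
  · rw [if_pos ⟨by ring, by omega⟩, if_pos ⟨by ring, by omega⟩]
    have hk' : (k : ℚ) ≠ 0 := by positivity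
    have h1 : ((-b - k : ℤ) : ℚ) / k = (j : ℚ) - (((b : ℚ) + k * j) / k) - 1 := by
      push_cast; field_simp; ring
    rw [h1]
    have := qchoose_reflect (((b : ℚ) + k * j) / k) j
    rw [this]
    push_cast
    ring_nf
  · rw [if_neg (by rintro ⟨-, h2⟩; omega), if_neg (by rintro ⟨-, h2⟩; omega)]
end
end

section
/- Formal residue change of variables: let R be a commutative ℚ-algebra, let f(x) ∈ R((x)) be a formal Laurent series, and let h(z_0) ∈ z_0 R[[z_0]] be a formal power series with zero constant term whose linear coefficient is invertible in R. Then the composition f(h(z_0)) is a well-defined element of R((z_0)) and Res_x f(x) = Res_{z_0} ( h'(z_0) · f(h(z_0)) ), where Res denotes the coefficient of the (−1)-st power of the variable. -/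
open PowerSeries HahnSeries

noncomputable section


private lemma ofPS_coeff_neg (R : Type) [CommRing R] (p : PowerSeries R) {n : ℤ} (hn : n < 0) :
    (ofPowerSeries ℤ R p).coeff n = 0 := by
  rw [ofPowerSeries_apply]
  apply embDomain_notin_range
  rintro ⟨m, hm⟩
  have hm' : (m : ℤ) = n := hm
  omega

private lemma key_coeff (R : Type) [CommRing R] [Algebra ℚ R]
    (u v : PowerSeries R) (huv : u * v = 1) (k : ℕ) :
    PowerSeries.coeff k (d⁄dX R (X * u) * v ^ (k+1)) = (if k = 0 then (1:R) else 0) := by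
  have dXu : d⁄dX R (X * u) = X * d⁄dX R u + u := by
    rw [Derivation.leibniz]
    simp [smul_eq_mul, mul_comm]
  have rel : u * d⁄dX R v + v * d⁄dX R u = 0 := by
    have := congrArg (d⁄dX R) huv
    rw [Derivation.leibniz] at this
    simpa [smul_eq_mul] using this
  have dv : d⁄dX R v = -(d⁄dX R u * v ^ 2) := by
    linear_combination v * rel - (d⁄dX R v) * huv
  rcases Nat.eq_zero_or_pos k with hk | hk
  · subst hk
    simp only [if_pos rfl, pow_one]
    rw [dXu]
    have : (X * d⁄dX R u + u) * v ^ (0+1) = X * (d⁄dX R u * v) + u * v := by ring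
    rw [this]
    have h0 : PowerSeries.coeff 0 (X * (d⁄dX R u * v)) = 0 := by
      simpa using PowerSeries.coeff_zero_X_mul (d⁄dX R u * v) (R := R)
    rw [map_add, h0, huv, zero_add, PowerSeries.coeff_zero_eq_constantCoeff, map_one]
    simp
  · obtain ⟨j, rfl⟩ : ∃ j, k = j + 1 := ⟨k - 1, by omega⟩
    rw [if_neg (by omega)]
    have split : d⁄dX R (X * u) * v ^ (j + 1 + 1) =
        X * (d⁄dX R u * v ^ (j + 1 + 1)) + v ^ (j + 1) := by
      rw [dXu]
      have : (X * d⁄dX R u + u) * v ^ (j + 1 + 1)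
          = X * (d⁄dX R u * v ^ (j + 1 + 1)) + (u * v) * v ^ (j + 1) := by ring
      rw [this, huv, one_mul]
    rw [split, map_add, PowerSeries.coeff_succ_X_mul]
    -- derivative of v ^ (j+1)
    have dvp : d⁄dX R (v ^ (j + 1)) = -((j+1 : ℕ) • (d⁄dX R u * v ^ (j + 1 + 1))) := by
      rw [Derivation.leibniz_pow]
      simp only [Nat.add_sub_cancel, dv, smul_eq_mul]
      push_cast
      ring
    have hco : PowerSeries.coeff j (d⁄dX R (v ^ (j + 1)))
        = PowerSeries.coeff (j+1) (v ^ (j+1)) * (j+1 : ℕ) := by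
      rw [PowerSeries.coeff_derivative]
      push_cast
      ring
    rw [dvp, map_neg, map_nsmul, nsmul_eq_mul] at hco
    have hkey : ((j+1 : ℕ) : R) *
        (PowerSeries.coeff j (d⁄dX R u * v ^ (j + 1 + 1))
          + PowerSeries.coeff (j+1) (v ^ (j+1))) = 0 := by
      push_cast at hco ⊢
      linear_combination (-1 : R) * hco
    have hU : IsUnit ((j+1 : ℕ) : R) := by
      have : ((j+1 : ℕ) : R) = algebraMap ℚ R ((j+1 : ℕ) : ℚ) := by
        simp
      rw [this]
      exact (isUnit_iff_ne_zero.2 (by positivity)).map (algebraMap ℚ R)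
    exact (hU.mul_right_eq_zero).mp hkey

/-- formal residue change of variables: let `R` be a commutative
`ℚ`-algebra, `f ∈ R((x))` a formal Laurent series, and `h ∈ z₀ R[[z₀]]` a power series
with zero constant term and invertible linear coefficient.  Then `h`, viewed inside
`R((z₀))`, is invertible (this is the unit `H`, via which the composition
`f(h(z₀)) = Σ_n f_n H^n` is well defined term by term), and
`Res_x f(x) = Res_{z₀} (h'(z₀) · f(h(z₀)))`; by linearity the right-hand residue is
`Σ_n f_n · Res_{z₀}(h'(z₀) H^n)`, which is how it is written below
(`Res` is the coefficient of the `(−1)`-st power). -/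
theorem stmt8 (R : Type) [CommRing R] [Algebra ℚ R]
    (f : LaurentSeries R) (h : PowerSeries R)
    (h0 : PowerSeries.constantCoeff h = 0)
    (h1 : IsUnit (PowerSeries.coeff 1 h)) :
    ∃ H : (LaurentSeries R)ˣ,
      (H : LaurentSeries R) = HahnSeries.ofPowerSeries ℤ R h ∧
      f.coeff (-1) = ∑ᶠ n : ℤ, f.coeff n *
        ((HahnSeries.ofPowerSeries ℤ R
            (PowerSeries.mk fun m => (m + 1 : ℕ) * PowerSeries.coeff (m + 1) h)) *
          ((H ^ n : (LaurentSeries R)ˣ) : LaurentSeries R)).coeff (-1) := by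
  -- decompose h = X * u
  obtain ⟨u, hu⟩ : (X : R⟦X⟧) ∣ h := X_dvd_iff.mpr h0
  have hcu : IsUnit (constantCoeff u) := by
    have : PowerSeries.coeff 1 h = constantCoeff u := by
      rw [hu, ← PowerSeries.coeff_zero_eq_constantCoeff]
      exact PowerSeries.coeff_succ_X_mul 0 u
    rwa [this] at h1
  obtain ⟨U, hU⟩ : IsUnit u := PowerSeries.isUnit_iff_constantCoeff.mpr hcu
  set v : R⟦X⟧ := (↑U⁻¹ : R⟦X⟧) with hv
  have huv : u * v = 1 := by rw [hv, ← hU]; exact U.mul_inv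
  -- the unit H
  have hz : (single (1:ℤ) (1:R) : LaurentSeries R) * single (-1:ℤ) (1:R) = 1 := by
    rw [single_mul_single]
    norm_num
  set zU : (LaurentSeries R)ˣ := Units.mkOfMulEqOne _ _ hz with hzU
  set H : (LaurentSeries R)ˣ :=
    zU * Units.map (ofPowerSeries ℤ R).toMonoidHom U with hH
  have Hval : (H : LaurentSeries R) = ofPowerSeries ℤ R h := by
    rw [hH, Units.val_mul]
    show (single (1:ℤ) (1:R)) * ofPowerSeries ℤ R (U : R⟦X⟧) = _
    rw [hU, ← ofPowerSeries_X, ← map_mul, ← hu]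
  have Hinv : ((H⁻¹ : (LaurentSeries R)ˣ) : LaurentSeries R)
      = single (-1:ℤ) (1:R) * ofPowerSeries ℤ R v := by
    apply Units.inv_eq_of_mul_eq_one_right
    rw [Hval, hu, map_mul, ofPowerSeries_X]
    calc single (1:ℤ) (1:R) * ofPowerSeries ℤ R u *
          (single (-1:ℤ) (1:R) * ofPowerSeries ℤ R v)
        = (single (1:ℤ) (1:R) * single (-1:ℤ) (1:R)) *
            (ofPowerSeries ℤ R u * ofPowerSeries ℤ R v) := by ring
      _ = 1 := by rw [hz, ← map_mul, huv, map_one, one_mul]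
  refine ⟨H, Hval, ?_⟩
  set D : R⟦X⟧ := PowerSeries.mk fun m => (m + 1 : ℕ) * PowerSeries.coeff (m + 1) h with hD
  have hDd : D = d⁄dX R h := by
    ext m
    rw [hD, PowerSeries.coeff_mk, PowerSeries.coeff_derivative]
    push_cast
    ring
  -- residue computation
  have hres : ∀ n : ℤ,
      ((ofPowerSeries ℤ R D) * ((H ^ n : (LaurentSeries R)ˣ) : LaurentSeries R)).coeff (-1)
        = if n = -1 then (1:R) else 0 := by
    intro n
    cases n with
    | ofNat k =>
      rw [if_neg (show (Int.ofNat k : ℤ) ≠ -1 by rw [Int.ofNat_eq_coe]; omega)]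
      have : ((H ^ (Int.ofNat k) : (LaurentSeries R)ˣ) : LaurentSeries R)
          = ofPowerSeries ℤ R (h ^ k) := by
        rw [Int.ofNat_eq_coe, zpow_natCast, Units.val_pow_eq_pow_val, Hval, map_pow]
      rw [this, ← map_mul]
      exact ofPS_coeff_neg R _ (by norm_num)
    | negSucc k =>
      have hpow : ((H ^ (Int.negSucc k) : (LaurentSeries R)ˣ) : LaurentSeries R)
          = single (-(k+1) : ℤ) (1:R) * ofPowerSeries ℤ R (v ^ (k+1)) := by
        have hsp : (single (-1:ℤ) (1:R))^(k+1) = single (-(k+1):ℤ) (1:R) := by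
          rw [single_pow, one_pow]
          norm_num
        have hvp : (ofPowerSeries ℤ R v)^(k+1) = ofPowerSeries ℤ R (v^(k+1)) :=
          (map_pow (ofPowerSeries ℤ R) v (k+1)).symm
        rw [zpow_negSucc, ← inv_pow, Units.val_pow_eq_pow_val, Hinv, mul_pow, hsp, hvp]
      rw [hpow]
      have : (ofPowerSeries ℤ R D) *
            (single (-(k+1) : ℤ) (1:R) * ofPowerSeries ℤ R (v ^ (k+1)))
          = single (-(k+1) : ℤ) (1:R) * (ofPowerSeries ℤ R (D * v ^ (k+1))) := by
        rw [map_mul]; ring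
      rw [this]
      have hcoeff : (single (-(k+1) : ℤ) (1:R) *
            (ofPowerSeries ℤ R (D * v ^ (k+1)))).coeff ((k : ℤ) + (-(k+1) : ℤ))
          = 1 * (ofPowerSeries ℤ R (D * v ^ (k+1))).coeff (k : ℤ) :=
        coeff_single_mul_add
      have he : ((k : ℤ) + (-(k+1) : ℤ)) = (-1 : ℤ) := by omega
      rw [he] at hcoeff
      rw [hcoeff, one_mul, ofPowerSeries_apply_coeff, hDd, hu, key_coeff R u v huv k]
      by_cases hk : k = 0 <;> simp [hk, Int.negSucc_eq]
  have hfun : ∀ n : ℤ, f.coeff n *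
      ((ofPowerSeries ℤ R D) * ((H ^ n : (LaurentSeries R)ˣ) : LaurentSeries R)).coeff (-1)
        = if n = -1 then f.coeff (-1) else 0 := by
    intro n
    rw [hres n]
    by_cases hn : n = -1 <;> simp [hn]
  rw [finsum_congr hfun, finsum_eq_single _ (-1 : ℤ) (fun x hx => by rw [if_neg hx]),
    if_pos rfl]
end
end
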